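/- In the setting of the thin-domain Korn estimate: if A : (-L,L) → ℝ^{2×2} is piecewise constant on intervals of length ℓ_h ≈ h, skew-symmetric valued, and satisfies the difference estimate ∫_{(a,a+ℓ_h)×(-h/2,h/2)} |A(x₁+ℓ_h) - A(x₁)|² dx ≤ C ∫_{(a,a+2ℓ_h)×(-h/2,h/2)} |ε(u)|² dx for each grid point a, then ∫_{Ω_h} |A(x₁) - A(-L)|² dx ≤ C' N_h² ∫_{Ω_h} |ε(u)|² dx, where N_h ≈ 2L/h is the number of intervals. -/
import Mathlib


/- STATEMENT 9: discrete telescoping estimate for the piecewise-constant skew matrices in the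
thin-domain Korn argument. A is piecewise constant on N ≈ 2L/h intervals of length ℓ_h with
values B k; the weight h·ℓ_h appearing on both sides of the integral formulation cancels, so the
statement reads: if the squared difference of consecutive values is bounded by C times the sum
of the two adjacent local energies e k (so that each local energy is counted at most twice),
then ∑_{k<N} |B k - B 0|² ≤ 2 C N² ∑_{k<N} e k. -/

open Matrix
noncomputable section

theorem stmt9 (C : ℝ) (hC : 0 ≤ C) (N : ℕ)
    (B : ℕ → Matrix (Fin 2) (Fin 2) ℝ) (e : ℕ → ℝ)
    (hBskew : ∀ k, (B k)ᵀ = -(B k))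
    (he : ∀ k, 0 ≤ e k)
    (hdiff : ∀ k, k + 1 < N →
      ∑ i, ∑ j, ((B (k + 1) - B k) i j) ^ 2 ≤ C * (e k + e (k + 1))) :
    ∑ k ∈ Finset.range N, ∑ i, ∑ j, ((B k - B 0) i j) ^ 2
      ≤ 2 * C * (N : ℝ) ^ 2 * ∑ k ∈ Finset.range N, e k := by
  set S := ∑ k ∈ Finset.range N, e k with hS
  have hSnn : 0 ≤ S := Finset.sum_nonneg fun k _ => he k
  have key : ∀ k ∈ Finset.range N,
      ∑ i, ∑ j, ((B k - B 0) i j) ^ 2 ≤ 2 * C * (N : ℝ) * S := by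
    intro k hk
    rw [Finset.mem_range] at hk
    have tele : ∀ i j, (B k - B 0) i j
        = ∑ m ∈ Finset.range k, ((B (m + 1) - B m) i j) := by
      intro i j
      simp only [Matrix.sub_apply]
      rw [Finset.sum_range_sub (fun m => B m i j)]
    have hek : ∑ m ∈ Finset.range k, e m ≤ S :=
      Finset.sum_le_sum_of_subset_of_nonneg
        (Finset.range_subset_range.2 hk.le) (fun i _ _ => he i)
    have hek1 : ∑ m ∈ Finset.range k, e (m + 1) ≤ S := by
      have h1 : ∑ m ∈ Finset.range (k + 1), e m
          = ∑ m ∈ Finset.range k, e (m + 1) + e 0 := Finset.sum_range_succ' e k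
      have h2 : ∑ m ∈ Finset.range (k + 1), e m ≤ S :=
        Finset.sum_le_sum_of_subset_of_nonneg
          (Finset.range_subset_range.2 hk) (fun i _ _ => he i)
      nlinarith [he 0]
    calc ∑ i, ∑ j, ((B k - B 0) i j) ^ 2
        = ∑ i, ∑ j, (∑ m ∈ Finset.range k, ((B (m + 1) - B m) i j)) ^ 2 := by
          simp_rw [tele]
      _ ≤ ∑ i, ∑ j, ((k : ℝ) *
            ∑ m ∈ Finset.range k, ((B (m + 1) - B m) i j) ^ 2) := by
          refine Finset.sum_le_sum fun i _ => Finset.sum_le_sum fun j _ => ?_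
          have := sq_sum_le_card_mul_sum_sq (s := Finset.range k)
            (f := fun m => (B (m + 1) - B m) i j)
          simpa using this
      _ = (k : ℝ) * ∑ m ∈ Finset.range k, ∑ i, ∑ j, ((B (m + 1) - B m) i j) ^ 2 := by
          simp_rw [← Finset.mul_sum]
          congr 1
          exact (Finset.sum_congr rfl fun i _ => Finset.sum_comm).trans Finset.sum_comm
      _ ≤ (N : ℝ) * ∑ m ∈ Finset.range k, (C * (e m + e (m + 1))) := by
          refine mul_le_mul (by exact_mod_cast hk.le)
            (Finset.sum_le_sum fun m hm => ?_) ?_ (by positivity)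
          · exact hdiff m (by have := Finset.mem_range.1 hm; omega)
          · exact Finset.sum_nonneg fun m _ => Finset.sum_nonneg fun i _ =>
              Finset.sum_nonneg fun j _ => sq_nonneg _
      _ = (N : ℝ) * (C * (∑ m ∈ Finset.range k, e m
            + ∑ m ∈ Finset.range k, e (m + 1))) := by
          rw [← Finset.mul_sum, Finset.sum_add_distrib]
      _ ≤ (N : ℝ) * (C * (S + S)) := by
          gcongr
      _ = 2 * C * (N : ℝ) * S := by ring
  calc ∑ k ∈ Finset.range N, ∑ i, ∑ j, ((B k - B 0) i j) ^ 2
      ≤ ∑ _k ∈ Finset.range N, (2 * C * (N : ℝ) * S) := Finset.sum_le_sum key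
    _ = (N : ℝ) * (2 * C * (N : ℝ) * S) := by
        rw [Finset.sum_const, Finset.card_range, nsmul_eq_mul]
    _ = 2 * C * (N : ℝ) ^ 2 * S := by ring
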